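/- Let p and q be distinct primes, let d be the multiplicative order of q modulo p, and let v = (p−1)/d. Then the polynomial f = 1 + X + X² + ⋯ + X^{p−1} over the q-adic integers ℤ_q factorizes as f = f₁·f₂·⋯·f_v, where each f_r is a monic irreducible polynomial over ℤ_q of degree d, and the reductions of f₁,…,f_v modulo q are pairwise distinct monic irreducible polynomials of degree d over 𝔽_q whose product is the reduction of f. -/

import Mathlib

open Polynomial

namespace GeoPadic

variable {q : ℕ} [hq : Fact q.Prime]

local notation "π" => PadicInt.toZMod (p := q)

lemma toZMod_surj : Function.Surjective (PadicInt.toZMod (p := q)) := fun c =>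
  ⟨(c.val : ℤ_[q]), by rw [map_natCast]; simp⟩

lemma pi_zero_iff (x : ℤ_[q]) : π x = 0 ↔ (q : ℤ_[q]) ∣ x := by
  rw [← RingHom.mem_ker, PadicInt.ker_toZMod, PadicInt.maximalIdeal_eq_span_p,
    Ideal.mem_span_singleton]

lemma map_pi_eq_zero_iff {P : ℤ_[q][X]} : P.map π = 0 ↔ C (q : ℤ_[q]) ∣ P := by
  rw [Polynomial.C_dvd_iff_dvd_coeff, Polynomial.ext_iff]
  refine forall_congr' fun i => ?_
  rw [coeff_map, coeff_zero, pi_zero_iff]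

lemma map_pi_eq_of_dvd {P Q : ℤ_[q][X]} (h : C (q : ℤ_[q]) ∣ P - Q) :
    P.map π = Q.map π := by
  have : (P - Q).map π = 0 := map_pi_eq_zero_iff.mpr h
  rw [Polynomial.map_sub, sub_eq_zero] at this
  exact this



lemma hensel_step (f g h a b : ℤ_[q][X]) (A B : (ZMod q)[X]) (k : ℕ)
    (hf : f.Monic) (hg : g.Monic) (hh : h.Monic)
    (hdeg : g.natDegree + h.natDegree = f.natDegree)
    (hgA : g.map π = A) (hhB : h.map π = B)
    (hab : a.map π * A + b.map π * B = 1)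
    (hdvd : C ((q : ℤ_[q]) ^ (k + 1)) ∣ f - g * h) :
    ∃ g' h' : ℤ_[q][X], g'.Monic ∧ h'.Monic ∧ g'.natDegree = g.natDegree ∧
      h'.natDegree = h.natDegree ∧
      C ((q : ℤ_[q]) ^ (k + 1)) ∣ g' - g ∧ C ((q : ℤ_[q]) ^ (k + 1)) ∣ h' - h ∧
      C ((q : ℤ_[q]) ^ (k + 2)) ∣ f - g' * h' := by
  obtain ⟨E, hE⟩ := hdvd
  rcases eq_or_ne E 0 with rfl | hE0
  · exact ⟨g, h, hg, hh, rfl, rfl, by simp, by simp,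
      by rw [mul_zero] at hE; rw [sub_eq_zero] at hE; simp [hE]⟩
  set s := g.natDegree with hs
  set t := h.natDegree with ht
  set Q : ℤ_[q] := (q : ℤ_[q]) ^ (k + 1) with hQ
  have hQ0 : Q ≠ 0 := pow_ne_zero _ (Nat.cast_ne_zero.mpr hq.out.ne_zero)
  set u : ℤ_[q][X] := (b * E) %ₘ g with hu
  set w' : ℤ_[q][X] := a * E + h * ((b * E) /ₘ g) with hw'
  set w : ℤ_[q][X] := w' %ₘ (X ^ t) with hw
  -- degree facts
  have hdegu : u.degree < g.degree := degree_modByMonic_lt _ hg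
  have hdegw : w.degree < (t : WithBot ℕ) := by
    simpa using degree_modByMonic_lt w' (monic_X_pow t)
  have hgdeg : g.degree = (s : WithBot ℕ) := degree_eq_natDegree hg.ne_zero
  have hhdeg : h.degree = (t : WithBot ℕ) := degree_eq_natDegree hh.ne_zero
  have hA : A.Monic := hgA ▸ hg.map π
  have hB : B.Monic := hhB ▸ hh.map π
  have hAdeg : A.degree = (s : WithBot ℕ) := by
    rw [degree_eq_natDegree hA.ne_zero, ← hgA, hg.natDegree_map]
  have hBdeg : B.degree = (t : WithBot ℕ) := by
    rw [degree_eq_natDegree hB.ne_zero, ← hhB, hh.natDegree_map]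
  -- identity in (ZMod q)[X]
  have div := modByMonic_add_div (b.map π * E.map π) A
  have hid : A * (w'.map π) + B * (u.map π) = E.map π := by
    rw [hw', hu, Polynomial.map_add, Polynomial.map_mul, Polynomial.map_mul,
      map_divByMonic π hg, map_modByMonic π hg, hhB, Polynomial.map_mul, hgA]
    linear_combination Polynomial.map π E * hab + B * div
  -- degree of E
  have hfdeg : f.degree = ((s + t : ℕ) : WithBot ℕ) := by
    rw [degree_eq_natDegree hf.ne_zero, hdeg]
  have hdegE : E.degree < ((s + t : ℕ) : WithBot ℕ) := by
    have h1 : (C Q * E).degree = E.degree := by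
      rw [degree_mul, degree_C hQ0, zero_add]
    have h2 : (f - g * h).degree < f.degree := by
      refine degree_sub_lt ?_ hf.ne_zero ?_
      · rw [degree_mul, hgdeg, hhdeg, hfdeg, Nat.cast_add]
      · rw [hf.leadingCoeff, (hg.mul hh).leadingCoeff]
    rw [hE, h1] at h2; rwa [hfdeg] at h2
  -- degree of w'.map π is < t
  have hdegw' : (w'.map π).degree < (t : WithBot ℕ) := by
    have hAw : A * (w'.map π) = E.map π - B * (u.map π) := by
      linear_combination hid
    rcases eq_or_ne (w'.map π) 0 with h0 | h0
    · rw [h0, degree_zero]; exact WithBot.bot_lt_coe t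
    have hrhs : (E.map π - B * (u.map π)).degree < ((s + t : ℕ) : WithBot ℕ) := by
      refine lt_of_le_of_lt (degree_sub_le _ _) (max_lt ?_ ?_)
      · exact lt_of_le_of_lt (degree_map_le) hdegE
      · rcases eq_or_ne (u.map π) 0 with h1 | h1
        · rw [h1, mul_zero, degree_zero]; exact WithBot.bot_lt_coe _
        · rw [degree_mul, hBdeg]
          have : (u.map π).degree < (s : WithBot ℕ) :=
            lt_of_le_of_lt degree_map_le (hgdeg ▸ hdegu)
          calc (t : WithBot ℕ) + (u.map π).degree < (t : WithBot ℕ) + s :=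
                WithBot.add_lt_add_left (by simp) this
            _ = ((s + t : ℕ) : WithBot ℕ) := by rw [Nat.cast_add]; ring
    rw [← hAw, degree_mul, hAdeg, Nat.cast_add] at hrhs
    exact lt_of_add_lt_add_left hrhs
  have wbar : w.map π = w'.map π := by
    rw [hw, map_modByMonic π (monic_X_pow t), Polynomial.map_pow, map_X]
    exact (modByMonic_eq_self_iff (monic_X_pow t)).mpr (by rwa [degree_X_pow])
  -- the key divisibility
  have key : (E - g * w - h * u).map π = 0 := by
    rw [Polynomial.map_sub, Polynomial.map_sub, Polynomial.map_mul, Polynomial.map_mul,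
      hgA, hhB, wbar]
    linear_combination -hid
  -- assembling
  have hCu : (C Q * u).degree ≤ u.degree := by
    refine le_trans (degree_mul_le _ _) ?_
    refine le_trans (add_le_add_left degree_C_le _) ?_
    simp
  have hCw : (C Q * w).degree ≤ w.degree := by
    refine le_trans (degree_mul_le _ _) ?_
    refine le_trans (add_le_add_left degree_C_le _) ?_
    simp
  have hgu : (C Q * u).degree < g.degree := lt_of_le_of_lt hCu hdegu
  have hhw : (C Q * w).degree < h.degree := lt_of_le_of_lt hCw (hhdeg ▸ hdegw)
  refine ⟨g + C Q * u, h + C Q * w, ?_, ?_, ?_, ?_, ?_, ?_, ?_⟩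
  · exact hg.add_of_left hgu
  · exact hh.add_of_left hhw
  · exact natDegree_eq_of_degree_eq (degree_add_eq_left_of_degree_lt hgu)
  · exact natDegree_eq_of_degree_eq (degree_add_eq_left_of_degree_lt hhw)
  · simpa using dvd_mul_right (C Q) u
  · simpa using dvd_mul_right (C Q) w
  · have expand : f - (g + C Q * u) * (h + C Q * w)
        = C Q * (E - g * w - h * u - C Q * (u * w)) := by
      linear_combination hE
    rw [expand]
    have hpow : (q : ℤ_[q]) ^ (k + 2) = Q * q := by rw [hQ, pow_succ]
    rw [hpow, map_mul]
    refine mul_dvd_mul_left (C Q) (dvd_sub (map_pi_eq_zero_iff.mp key) ?_)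
    exact dvd_mul_of_dvd_left (hQ ▸ map_dvd C (dvd_pow_self (q : ℤ_[q]) (Nat.succ_ne_zero k))) _

lemma pow_dvd_of_smodeq {x y : ℤ_[q]} {n : ℕ}
    (h : x ≡ y [SMOD ((IsLocalRing.maximalIdeal ℤ_[q]) ^ n • ⊤ : Ideal ℤ_[q])]) :
    (q : ℤ_[q]) ^ n ∣ x - y := by
  have := SModEq.sub_mem.mp h
  rwa [smul_eq_mul, Ideal.mul_top, PadicInt.maximalIdeal_eq_span_p,
    Ideal.span_singleton_pow, Ideal.mem_span_singleton] at this

lemma smodeq_of_pow_dvd {x y : ℤ_[q]} {n : ℕ} (h : (q : ℤ_[q]) ^ n ∣ x - y) :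
    x ≡ y [SMOD ((IsLocalRing.maximalIdeal ℤ_[q]) ^ n • ⊤ : Ideal ℤ_[q])] := by
  rw [SModEq.sub_mem, smul_eq_mul, Ideal.mul_top, PadicInt.maximalIdeal_eq_span_p,
    Ideal.span_singleton_pow, Ideal.mem_span_singleton]
  exact h

lemma eq_zero_of_forall_pow_dvd (x : ℤ_[q]) (hx : ∀ k : ℕ, (q : ℤ_[q]) ^ k ∣ x) :
    x = 0 :=
  IsHausdorff.haus (inferInstance : IsHausdorff (IsLocalRing.maximalIdeal ℤ_[q]) ℤ_[q]) x
    fun n => smodeq_of_pow_dvd (by simpa using hx n)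

/-- construct the limit polynomial of degree `s` from a sequence of monic polys -/
lemma limit_poly (s : ℕ) (c : ℕ → ℤ_[q][X])
    (hmono : ∀ c' ∈ Set.range c, c'.Monic ∧ c'.natDegree = s)
    (hclose : ∀ m n, m ≤ n → C ((q : ℤ_[q]) ^ m) ∣ c n - c m) :
    ∃ G : ℤ_[q][X], G.Monic ∧ G.natDegree = s ∧
      ∀ k, C ((q : ℤ_[q]) ^ k) ∣ G - c k := by
  have aux : ∀ (i m n : ℕ), m ≤ n → (c m).coeff i ≡ (c n).coeff i
      [SMOD ((IsLocalRing.maximalIdeal ℤ_[q]) ^ m • ⊤ : Ideal ℤ_[q])] := by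
    intro i m n hmn
    have h1 := (Polynomial.C_dvd_iff_dvd_coeff _ _).mp (hclose m n hmn) i
    rw [Polynomial.coeff_sub] at h1
    exact (smodeq_of_pow_dvd (n := m) (x := (c n).coeff i) (y := (c m).coeff i) h1).symm
  have hlim : ∀ i : ℕ, ∃ L : ℤ_[q], ∀ n, (c n).coeff i ≡ L
      [SMOD ((IsLocalRing.maximalIdeal ℤ_[q]) ^ n • ⊤ : Ideal ℤ_[q])] := fun i =>
    IsPrecomplete.prec' _ (aux i _ _)
  choose L hL using hlim
  have hdeglt : (∑ i ∈ Finset.range s, C (L i) * X ^ i).degree < (s : WithBot ℕ) := by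
    refine lt_of_le_of_lt (degree_sum_le _ _) ?_
    refine (Finset.sup_lt_iff (WithBot.bot_lt_coe s)).mpr ?_
    intro i hi
    exact lt_of_le_of_lt (degree_C_mul_X_pow_le _ _)
      (WithBot.coe_lt_coe.mpr (Finset.mem_range.mp hi))
  have hmonic : (X ^ s + ∑ i ∈ Finset.range s, C (L i) * X ^ i).Monic :=
    monic_X_pow_add hdeglt
  have hdegG : (X ^ s + ∑ i ∈ Finset.range s, C (L i) * X ^ i).natDegree = s := by
    refine natDegree_eq_of_degree_eq_some ?_
    rw [add_comm, degree_add_eq_right_of_degree_lt (by rwa [degree_X_pow]), degree_X_pow]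
  refine ⟨X ^ s + ∑ i ∈ Finset.range s, C (L i) * X ^ i, hmonic, hdegG, ?_⟩
  intro k
  rw [Polynomial.C_dvd_iff_dvd_coeff]
  intro i
  rw [coeff_sub]
  have hcoeffsum : ∀ j, (∑ i ∈ Finset.range s, C (L i) * X ^ i).coeff j
      = if j < s then L j else 0 := by
    intro j
    rw [finset_sum_coeff]
    simp only [coeff_C_mul, coeff_X_pow]
    rcases lt_or_ge j s with hj | hj
    · rw [Finset.sum_eq_single j]
      · simp [hj]
      · intro b _ hbj; rw [if_neg (fun h => hbj h.symm), mul_zero]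
      · intro hj'; exact absurd (Finset.mem_range.mpr hj) hj'
    · rw [if_neg (not_lt.mpr hj)]
      refine Finset.sum_eq_zero fun b hb => ?_
      have hbj : b ≠ j := fun h => absurd (h ▸ Finset.mem_range.mp hb) (not_lt.mpr hj)
      rw [if_neg (fun h => hbj h.symm), mul_zero]
  obtain ⟨hck_mono, hck_deg⟩ := hmono (c k) ⟨k, rfl⟩
  rcases lt_trichotomy i s with his | his | his
  · rw [coeff_add, hcoeffsum, if_pos his, coeff_X_pow, if_neg (Nat.ne_of_lt his), zero_add]
    have h1 := pow_dvd_of_smodeq (hL i k)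
    have h2 := dvd_neg.mpr h1
    rwa [neg_sub] at h2
  · subst his
    rw [coeff_add, hcoeffsum, if_neg (lt_irrefl _), coeff_X_pow, if_pos rfl, add_zero]
    rw [← hck_deg, hck_mono.coeff_natDegree, sub_self]
    exact dvd_zero _
  · rw [coeff_add, hcoeffsum, if_neg (not_lt.mpr (le_of_lt his)), coeff_X_pow,
      if_neg (Nat.ne_of_gt his), add_zero, zero_sub]
    rw [coeff_eq_zero_of_natDegree_lt (hck_deg ▸ his), neg_zero]
    exact dvd_zero _

lemma hensel_lift (f : ℤ_[q][X]) (hf : f.Monic) (A B : (ZMod q)[X])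
    (hA : A.Monic) (hB : B.Monic) (hAB : IsCoprime A B)
    (hred : f.map π = A * B) :
    ∃ G H : ℤ_[q][X], G.Monic ∧ H.Monic ∧ f = G * H ∧ G.map π = A ∧ H.map π = B := by
  obtain ⟨a0, b0, hab0⟩ := hAB
  obtain ⟨a, ha⟩ := Polynomial.map_surjective _ toZMod_surj a0
  obtain ⟨b, hb⟩ := Polynomial.map_surjective _ toZMod_surj b0
  have memlift : ∀ P : (ZMod q)[X], P ∈ Polynomial.lifts (PadicInt.toZMod (p := q)) := by
    intro P; rw [lifts_iff_coeff_lifts]; intro n; exact toZMod_surj _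
  obtain ⟨g0, hg0map, hg0deg, hg0mon⟩ := lifts_and_degree_eq_and_monic (memlift A) hA
  obtain ⟨h0, hh0map, hh0deg, hh0mon⟩ := lifts_and_degree_eq_and_monic (memlift B) hB
  have hdeg : g0.natDegree + h0.natDegree = f.natDegree := by
    have h1 : f.natDegree = A.natDegree + B.natDegree := by
      rw [← hf.natDegree_map (PadicInt.toZMod (p := q)), hred, hA.natDegree_mul hB]
    rw [natDegree_eq_of_degree_eq hg0deg, natDegree_eq_of_degree_eq hh0deg, h1]
  set P : ℕ → (ℤ_[q][X] × ℤ_[q][X]) → Prop := fun k x =>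
    x.1.Monic ∧ x.2.Monic ∧ x.1.natDegree = g0.natDegree ∧ x.2.natDegree = h0.natDegree ∧
    x.1.map π = A ∧ x.2.map π = B ∧ C ((q : ℤ_[q]) ^ (k+1)) ∣ f - x.1 * x.2 with hPdef
  have hstep : ∀ k x, P k x → ∃ y, P (k+1) y ∧
      C ((q : ℤ_[q]) ^ (k+1)) ∣ y.1 - x.1 ∧ C ((q : ℤ_[q]) ^ (k+1)) ∣ y.2 - x.2 := by
    rintro k ⟨g, h⟩ ⟨h1, h2, h3, h4, h5, h6, h7⟩
    obtain ⟨g', h', m1, m2, m3, m4, m5, m6, m7⟩ :=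
      hensel_step f g h a b A B k hf h1 h2 (by rw [h3, h4]; exact hdeg) h5 h6
        (by rw [ha, hb]; exact hab0) h7
    refine ⟨(g', h'), ⟨m1, m2, m3.trans h3, m4.trans h4, ?_, ?_, m7⟩, m5, m6⟩
    · rw [map_pi_eq_of_dvd ((_root_.map_dvd C (dvd_pow_self _ k.succ_ne_zero)).trans m5)]; exact h5
    · rw [map_pi_eq_of_dvd ((_root_.map_dvd C (dvd_pow_self _ k.succ_ne_zero)).trans m6)]; exact h6
  choose! next hnext1 hnext2 hnext3 using hstep
  set seq : ℕ → ℤ_[q][X] × ℤ_[q][X] := fun k => Nat.rec (g0, h0) next k with hseq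
  have hseqsucc : ∀ k, seq (k+1) = next k (seq k) := fun k => rfl
  have hPseq : ∀ k, P k (seq k) := by
    intro k; induction k with
    | zero =>
      show P 0 (g0, h0)
      refine ⟨hg0mon, hh0mon, rfl, rfl, hg0map, hh0map, ?_⟩
      rw [pow_one]
      refine map_pi_eq_zero_iff.mp ?_
      rw [Polynomial.map_sub, Polynomial.map_mul, hg0map, hh0map, hred, sub_self]
    | succ k ih => rw [hseqsucc]; exact hnext1 k (seq k) ih
  have hclose1 : ∀ k, C ((q : ℤ_[q]) ^ (k+1)) ∣ (seq (k+1)).1 - (seq k).1 := fun k => by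
    rw [hseqsucc]; exact hnext2 k (seq k) (hPseq k)
  have hclose2 : ∀ k, C ((q : ℤ_[q]) ^ (k+1)) ∣ (seq (k+1)).2 - (seq k).2 := fun k => by
    rw [hseqsucc]; exact hnext3 k (seq k) (hPseq k)
  have hchain : ∀ m n, m ≤ n → (C ((q : ℤ_[q]) ^ m) ∣ (seq n).1 - (seq m).1)
      ∧ (C ((q : ℤ_[q]) ^ m) ∣ (seq n).2 - (seq m).2) := by
    intro m n hmn
    induction n with
    | zero => obtain rfl := Nat.le_zero.mp hmn; simp
    | succ n ih =>
      obtain h | rfl := hmn.lt_or_eq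
      · have h' : m ≤ n := Nat.lt_succ_iff.mp h
        obtain ⟨i1, i2⟩ := ih h'
        constructor
        · have e : (seq (n+1)).1 - (seq m).1
              = ((seq (n+1)).1 - (seq n).1) + ((seq n).1 - (seq m).1) := by ring
          rw [e]
          exact dvd_add ((_root_.map_dvd C (pow_dvd_pow _ (h'.trans (Nat.le_succ n)))).trans
            (hclose1 n)) i1
        · have e : (seq (n+1)).2 - (seq m).2
              = ((seq (n+1)).2 - (seq n).2) + ((seq n).2 - (seq m).2) := by ring
          rw [e]
          exact dvd_add ((_root_.map_dvd C (pow_dvd_pow _ (h'.trans (Nat.le_succ n)))).trans (hclose2 n)) i2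
      · simp
  obtain ⟨G, hGmon, hGdeg, hGclose⟩ := limit_poly g0.natDegree (fun k => (seq k).1)
    (by rintro c' ⟨k, rfl⟩; exact ⟨(hPseq k).1, (hPseq k).2.2.1⟩)
    (fun m n hmn => (hchain m n hmn).1)
  obtain ⟨H, hHmon, hHdeg, hHclose⟩ := limit_poly h0.natDegree (fun k => (seq k).2)
    (by rintro c' ⟨k, rfl⟩; exact ⟨(hPseq k).2.1, (hPseq k).2.2.2.1⟩)
    (fun m n hmn => (hchain m n hmn).2)
  have hGmap : G.map π = A := by
    rw [map_pi_eq_of_dvd (by simpa using hGclose 1)]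
    exact (hPseq 1).2.2.2.2.1
  have hHmap : H.map π = B := by
    rw [map_pi_eq_of_dvd (by simpa using hHclose 1)]
    exact (hPseq 1).2.2.2.2.2.1
  have hdvdall : ∀ k, C ((q : ℤ_[q]) ^ k) ∣ f - G * H := by
    intro k
    have e : f - G * H = (f - (seq k).1 * (seq k).2)
        + (seq k).1 * ((seq k).2 - H) + H * ((seq k).1 - G) := by ring
    rw [e]
    refine dvd_add (dvd_add ?_ ?_) ?_
    · exact (_root_.map_dvd C (pow_dvd_pow _ (Nat.le_succ k))).trans (hPseq k).2.2.2.2.2.2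
    · exact ((dvd_sub_comm).mp (hHclose k)).mul_left _
    · exact ((dvd_sub_comm).mp (hGclose k)).mul_left _
  have hzero : f - G * H = 0 := by
    refine Polynomial.ext fun i => ?_
    rw [coeff_zero]
    exact eq_zero_of_forall_pow_dvd _ fun k =>
      (Polynomial.C_dvd_iff_dvd_coeff _ _).mp (hdvdall k) i
  exact ⟨G, H, hGmon, hHmon, sub_eq_zero.mp hzero, hGmap, hHmap⟩

lemma factor_degree (p : ℕ) (hp : p.Prime) (hpq : p ≠ q) (g : (ZMod q)[X])
    (hirr : Irreducible g) (hdvd : g ∣ ∑ i ∈ Finset.range p, X ^ i) :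
    g.natDegree = orderOf ((q : ZMod p)) := by
  haveI hpfact : Fact p.Prime := ⟨hp⟩
  set d := orderOf ((q : ZMod p)) with hd
  set m := g.natDegree with hm
  haveI : Fact (Irreducible g) := ⟨hirr⟩
  set F := AdjoinRoot g with hF
  set x := AdjoinRoot.root g with hx
  have hqp : ((q : ZMod p)) ≠ 0 := by
    rw [Ne, ZMod.natCast_eq_zero_iff]
    intro hdvd'
    exact hpq ((Nat.prime_dvd_prime_iff_eq hp hq.out).mp hdvd')
  have hd_pos : 0 < d := by
    rw [hd, orderOf_pos_iff, isOfFinOrder_iff_pow_eq_one]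
    exact ⟨p - 1, Nat.sub_pos_of_lt hp.one_lt, ZMod.pow_card_sub_one_eq_one hqp⟩
  haveI : CharP F q := charP_of_injective_algebraMap (algebraMap (ZMod q) F).injective q
  have hsum : (∑ i ∈ Finset.range p, x ^ i) = 0 := by
    obtain ⟨c, hc⟩ := hdvd
    have h1 : (Polynomial.aeval x) (∑ i ∈ Finset.range p, (X : (ZMod q)[X]) ^ i) = 0 := by
      rw [hc, map_mul, AdjoinRoot.aeval_eq, AdjoinRoot.mk_self, zero_mul]
    simpa [map_sum, map_pow, aeval_X] using h1
  have hxp : x ^ p = 1 := by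
    have h2 := geom_sum_mul x p
    rw [hsum, zero_mul] at h2
    exact sub_eq_zero.mp h2.symm
  have hx1 : x ≠ 1 := by
    intro h
    rw [h] at hsum
    simp only [one_pow, Finset.sum_const, Finset.card_range, nsmul_eq_mul, mul_one] at hsum
    rw [CharP.cast_eq_zero_iff F q] at hsum
    exact hpq ((Nat.prime_dvd_prime_iff_eq hq.out hp).mp hsum).symm
  have hord : orderOf x = p := orderOf_eq_prime hxp hx1
  haveI : Module.Finite (ZMod q) F :=
    Module.Finite.of_basis (AdjoinRoot.powerBasis hirr.ne_zero).basis
  haveI : Finite F := Module.finite_of_finite (ZMod q)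
  haveI : Fintype F := Fintype.ofFinite F
  have hcard : Fintype.card F = q ^ m := by
    rw [Module.card_eq_pow_finrank (K := ZMod q) (V := F), ZMod.card,
      (AdjoinRoot.powerBasis hirr.ne_zero).finrank, AdjoinRoot.powerBasis_dim]
  -- d ∣ m
  have hxunit : IsUnit x := IsUnit.of_pow_eq_one hxp hp.ne_zero
  have hdvd1 : p ∣ q ^ m - 1 := by
    have h1 : orderOf hxunit.unit ∣ Fintype.card Fˣ := orderOf_dvd_card
    classical
    rw [Fintype.card_units, hcard] at h1
    rwa [← orderOf_units, hxunit.unit_spec, hord] at h1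
  have hdm : d ∣ m := by
    apply orderOf_dvd_of_pow_eq_one
    have hqm1 : 1 ≤ q ^ m := Nat.one_le_pow _ _ hq.out.pos
    obtain ⟨c, hc⟩ := hdvd1
    have h2 : q ^ m = 1 + p * c := by omega
    have h3 : ((q ^ m : ℕ) : ZMod p) = 1 := by
      rw [h2]; push_cast [ZMod.natCast_self]; ring
    exact_mod_cast h3
  -- m ≤ d
  have hqd : ∃ c, q ^ d = 1 + p * c := by
    have h1 : ((q : ZMod p)) ^ d = 1 := pow_orderOf_eq_one _
    have hqd1 : 1 ≤ q ^ d := Nat.one_le_pow _ _ hq.out.pos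
    have h2 : ((q ^ d - 1 : ℕ) : ZMod p) = 0 := by
      rw [Nat.cast_sub hqd1]; push_cast [h1]; ring
    obtain ⟨c, hc⟩ := (ZMod.natCast_eq_zero_iff _ _).mp h2
    exact ⟨c, by omega⟩
  obtain ⟨c, hc⟩ := hqd
  haveI : ExpChar F q := ExpChar.prime hq.out
  set φ : F →+* F := iterateFrobenius F q d with hφ
  have hφfix : ∀ y : F, φ y = y := by
    have hxfix : φ x = x := by
      rw [hφ, iterateFrobenius_def, hc, pow_add, pow_one, pow_mul, hxp, one_pow, mul_one]
    have halg : ∀ c0 : ZMod q, φ (algebraMap (ZMod q) F c0) = algebraMap (ZMod q) F c0 := by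
      intro c0; rw [hφ, iterateFrobenius_def, ← map_pow, ZMod.pow_card_pow]
    let ψ : F →ₐ[ZMod q] F := { φ with commutes' := halg }
    have htop : Algebra.adjoin (ZMod q) {x} = ⊤ := AdjoinRoot.adjoinRoot_eq_top
    intro y
    have hy : y ∈ Algebra.adjoin (ZMod q) ({x} : Set F) := htop.symm ▸ Algebra.mem_top
    have hle : Algebra.adjoin (ZMod q) ({x} : Set F)
        ≤ AlgHom.equalizer ψ (AlgHom.id (ZMod q) F) := by
      refine Algebra.adjoin_le ?_
      intro z hz
      rw [Set.mem_singleton_iff] at hz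
      subst hz
      exact hxfix
    exact hle hy
  have hcard2 : Fintype.card F ≤ q ^ d := by
    classical
    set Pq : F[X] := X ^ (q ^ d) - X with hPq
    have hdeglt : (X : F[X]).degree < (X ^ (q ^ d) : F[X]).degree := by
      rw [degree_X_pow, degree_X]
      exact_mod_cast Nat.one_lt_pow hd_pos.ne' hq.out.one_lt
    have hPdeg : Pq.natDegree = q ^ d :=
      natDegree_eq_of_degree_eq_some (by rw [hPq, degree_sub_eq_left_of_degree_lt hdeglt,
        degree_X_pow])
    have hPne : Pq ≠ 0 := by
      intro h0
      rw [h0, natDegree_zero] at hPdeg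
      exact (pow_pos hq.out.pos d).ne' hPdeg.symm
    have hroot : ∀ y : F, y ∈ Pq.roots := by
      intro y
      rw [mem_roots']
      refine ⟨hPne, ?_⟩
      have := hφfix y
      rw [hφ, iterateFrobenius_def] at this
      simp [hPq, IsRoot, this]
    calc Fintype.card F = Finset.univ.card := rfl
      _ ≤ Pq.roots.toFinset.card :=
          Finset.card_le_card (fun y _ => Multiset.mem_toFinset.mpr (hroot y))
      _ ≤ Multiset.card Pq.roots := Pq.roots.toFinset_card_le
      _ ≤ Pq.natDegree := Pq.card_roots'
      _ = q ^ d := hPdeg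
  have hmd : m ≤ d := by
    rw [hcard] at hcard2
    exact (Nat.pow_le_pow_iff_right hq.out.one_lt).mp hcard2
  have hm_pos : 0 < m := hirr.natDegree_pos
  exact Nat.le_antisymm hmd (Nat.le_of_dvd hm_pos hdm)


lemma isUnit_of_pi {c : ℤ_[q]} (h : IsUnit (PadicInt.toZMod (p := q) c)) : IsUnit c := by
  by_contra hc
  have hmem : c ∈ IsLocalRing.maximalIdeal ℤ_[q] := hc
  rw [← PadicInt.ker_toZMod, RingHom.mem_ker] at hmem
  rw [hmem] at h
  exact not_isUnit_zero h

lemma irreducible_of_red {G : ℤ_[q][X]} (hG : G.Monic)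
    (h : Irreducible (G.map (PadicInt.toZMod (p := q)))) : Irreducible G := by
  constructor
  · intro hu
    exact h.not_isUnit (hu.map (mapRingHom (PadicInt.toZMod (p := q))))
  · intro A B hAB
    have hlc : A.leadingCoeff * B.leadingCoeff = 1 := by
      rw [← leadingCoeff_mul, ← hAB, hG.leadingCoeff]
    have hlcA : IsUnit A.leadingCoeff := IsUnit.of_mul_eq_one _ hlc
    have hlcB : IsUnit B.leadingCoeff := IsUnit.of_mul_eq_one _ (by rw [mul_comm]; exact hlc)
    have hmapAB : G.map π = A.map π * B.map π := by rw [hAB, Polynomial.map_mul]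
    have hdegA : (A.map π).natDegree = A.natDegree :=
      natDegree_map_of_leadingCoeff_ne_zero _ (hlcA.map (PadicInt.toZMod (p := q))).ne_zero
    have hdegB : (B.map π).natDegree = B.natDegree :=
      natDegree_map_of_leadingCoeff_ne_zero _ (hlcB.map (PadicInt.toZMod (p := q))).ne_zero
    rcases h.isUnit_or_isUnit hmapAB with hu | hu
    · left
      have h0 : A.natDegree = 0 := by rw [← hdegA]; exact natDegree_eq_zero_of_isUnit hu
      obtain ⟨c, rfl⟩ := Polynomial.natDegree_eq_zero.mp h0
      refine isUnit_C.mpr (isUnit_of_pi ?_)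
      rw [Polynomial.map_C] at hu
      exact isUnit_C.mp hu
    · right
      have h0 : B.natDegree = 0 := by rw [← hdegB]; exact natDegree_eq_zero_of_isUnit hu
      obtain ⟨c, rfl⟩ := Polynomial.natDegree_eq_zero.mp h0
      refine isUnit_C.mpr (isUnit_of_pi ?_)
      rw [Polynomial.map_C] at hu
      exact isUnit_C.mp hu

lemma monic_list_prod {l : List ((ZMod q)[X])} (h : ∀ a ∈ l, a.Monic) : l.prod.Monic := by
  induction l with
  | nil => simpa using monic_one
  | cons a t ih =>
    rw [List.prod_cons]
    exact (h a List.mem_cons_self).mul (ih fun b hb => h b (List.mem_cons_of_mem _ hb))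

lemma monic_ms_prod {N : Multiset ((ZMod q)[X])} (h : ∀ a ∈ N, a.Monic) : N.prod.Monic := by
  have h1 : (↑N.toList : Multiset ((ZMod q)[X])).prod = N.toList.prod :=
    Multiset.prod_coe N.toList
  rw [Multiset.coe_toList] at h1
  rw [h1]
  exact monic_list_prod fun a ha => h a (by rwa [← Multiset.mem_toList])

lemma lift_factors : ∀ (l : List ((ZMod q)[X])), l.Nodup →
    (∀ g ∈ l, g.Monic ∧ Irreducible g) → ∀ f : ℤ_[q][X], f.Monic →
    f.map (PadicInt.toZMod (p := q)) = l.prod →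
    ∃ L : List (ℤ_[q][X]), L.length = l.length ∧ f = L.prod ∧
      (∀ G ∈ L, G.Monic) ∧ L.map (Polynomial.map (PadicInt.toZMod (p := q))) = l := by
  intro l
  induction l with
  | nil =>
    intro _ _ f hf hmap
    refine ⟨[], rfl, ?_, by simp, by simp⟩
    have h0 : f.natDegree = 0 := by
      rw [← hf.natDegree_map (PadicInt.toZMod (p := q)), hmap]; simp
    simpa using (hf.natDegree_eq_zero).mp h0
  | cons A t ih =>
    intro hnodup hmem f hf hmap
    have hA := hmem A List.mem_cons_self
    have htmem : ∀ g ∈ t, g.Monic ∧ Irreducible g := fun g hg =>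
      hmem g (List.mem_cons_of_mem _ hg)
    have htmon : t.prod.Monic := monic_list_prod fun a ha => (htmem a ha).1
    have hcop : IsCoprime A t.prod := by
      rw [(hA.2).coprime_iff_not_dvd]
      intro hdvd
      have hprime : Prime A := (UniqueFactorizationMonoid.irreducible_iff_prime).mp hA.2
      have hdvd2 : A ∣ (↑t : Multiset ((ZMod q)[X])).prod := by rwa [Multiset.prod_coe]
      obtain ⟨g, hgmem, hgdvd⟩ := hprime.exists_mem_multiset_dvd hdvd2
      rw [Multiset.mem_coe] at hgmem
      have hg' := htmem g hgmem
      have heq : A = g := eq_of_monic_of_associated hA.1 hg'.1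
        (hA.2.associated_of_dvd hg'.2 hgdvd)
      exact (List.nodup_cons.mp hnodup).1 (heq ▸ hgmem)
    obtain ⟨G, H, hGmon, hHmon, hfGH, hGmap, hHmap⟩ :=
      hensel_lift f hf A t.prod hA.1 htmon hcop (by rw [hmap]; simp [List.prod_cons])
    obtain ⟨L', hlen', hprod', hmon', hmap'⟩ :=
      ih (List.nodup_cons.mp hnodup).2 htmem H hHmon hHmap
    refine ⟨G :: L', by simp [hlen'], by rw [List.prod_cons, ← hprod', hfGH], ?_,
      by simp [hGmap, hmap']⟩
    intro P hP
    rcases List.mem_cons.mp hP with rfl | hP'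
    · exact hGmon
    · exact hmon' _ hP'

end GeoPadic


/-- Let `p ≠ q` be primes, `d` the multiplicative order of `q` mod `p`, and
`v = (p-1)/d`.  Then `f = 1 + X + ⋯ + X^{p-1}` over `ℤ_q` factorizes as a product of
`v` monic irreducible polynomials of degree `d`, whose reductions mod `q` are pairwise
distinct monic irreducible polynomials of degree `d` over `𝔽_q` with product the
reduction of `f`. -/
theorem geometric_sum_padic_factorization
    (p q : ℕ) (hp : p.Prime) [hq : Fact q.Prime] (hpq : p ≠ q)
    (d v : ℕ) (hd : d = orderOf ((q : ZMod p))) (hv : v = (p - 1) / d) :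
    ∃ Fs : Fin v → Polynomial (PadicInt q),
      (∀ r, (Fs r).Monic ∧ Irreducible (Fs r) ∧ (Fs r).natDegree = d) ∧
      (∏ r, Fs r) = (∑ i ∈ Finset.range p, Polynomial.X ^ i) ∧
      (∀ r, ((Fs r).map (PadicInt.toZMod)).Monic ∧
        Irreducible ((Fs r).map (PadicInt.toZMod)) ∧
        ((Fs r).map (PadicInt.toZMod)).natDegree = d) ∧
      Function.Injective (fun r => (Fs r).map (PadicInt.toZMod)) ∧
      (∏ r, (Fs r).map (PadicInt.toZMod)) =
        ((∑ i ∈ Finset.range p, Polynomial.X ^ i : Polynomial (PadicInt q)).map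
          (PadicInt.toZMod)) := by
  classical
  haveI hpfact : Fact p.Prime := ⟨hp⟩
  set f : Polynomial (PadicInt q) := ∑ i ∈ Finset.range p, Polynomial.X ^ i with hfdef
  have hfmon : f.Monic := Polynomial.monic_geom_sum_X hp.ne_zero
  have hfdeg : f.natDegree = p - 1 := by
    have h2 := geom_sum_mul (Polynomial.X : Polynomial (PadicInt q)) p
    have h4 := congrArg Polynomial.natDegree h2
    have hX1 : (Polynomial.X - 1 : Polynomial (PadicInt q))
        = Polynomial.X - Polynomial.C 1 := by rw [map_one]
    have hXp1 : (Polynomial.X ^ p - 1 : Polynomial (PadicInt q))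
        = Polynomial.X ^ p - Polynomial.C 1 := by rw [map_one]
    rw [hX1, hXp1, hfmon.natDegree_mul (Polynomial.monic_X_sub_C 1),
      Polynomial.natDegree_X_sub_C, Polynomial.natDegree_X_pow_sub_C] at h4
    omega
  set fbar := f.map (PadicInt.toZMod) with hfbardef
  have hfbarmon : fbar.Monic := hfmon.map _
  have hfbarne : fbar ≠ 0 := hfbarmon.ne_zero
  have hfbardeg : fbar.natDegree = p - 1 := by
    rw [hfbardef, hfmon.natDegree_map, hfdeg]
  have hfbar : fbar = ∑ i ∈ Finset.range p, (Polynomial.X : Polynomial (ZMod q)) ^ i := by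
    rw [hfbardef, hfdef, Polynomial.map_sum]
    simp
  have hqp : ((q : ZMod p)) ≠ 0 := by
    rw [Ne, ZMod.natCast_eq_zero_iff]
    intro hdvd'
    exact hpq ((Nat.prime_dvd_prime_iff_eq hp hq.out).mp hdvd')
  have hd_pos : 0 < d := by
    rw [hd, orderOf_pos_iff, isOfFinOrder_iff_pow_eq_one]
    exact ⟨p - 1, Nat.sub_pos_of_lt hp.one_lt, ZMod.pow_card_sub_one_eq_one hqp⟩
  have hdvd_d : d ∣ p - 1 := by
    rw [hd]
    exact orderOf_dvd_of_pow_eq_one (ZMod.pow_card_sub_one_eq_one hqp)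
  -- squarefree
  have hsep : fbar.Separable := by
    have hpq0 : ((p : ZMod q)) ≠ 0 := by
      rw [Ne, ZMod.natCast_eq_zero_iff]
      intro hdvd'
      exact hpq ((Nat.prime_dvd_prime_iff_eq hq.out hp).mp hdvd').symm
    have hdvd : fbar ∣ Polynomial.X ^ p - Polynomial.C 1 := by
      refine ⟨Polynomial.X - Polynomial.C 1, ?_⟩
      rw [hfbar, map_one]
      exact (geom_sum_mul (Polynomial.X : Polynomial (ZMod q)) p).symm
    exact Polynomial.Separable.of_dvd
      (Polynomial.separable_X_pow_sub_C 1 hpq0 one_ne_zero) hdvd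
  have hsqf : Squarefree fbar := hsep.squarefree
  set N := UniqueFactorizationMonoid.normalizedFactors fbar with hN
  have hfac_irr : ∀ a ∈ N, Irreducible a := fun a ha =>
    UniqueFactorizationMonoid.irreducible_of_normalized_factor a ha
  have hfac_mon : ∀ a ∈ N, a.Monic := fun a ha => by
    have h1 := UniqueFactorizationMonoid.normalize_normalized_factor a ha
    rw [← h1]
    exact Polynomial.monic_normalize (hfac_irr a ha).ne_zero
  have hNprod : N.prod = fbar :=
    Polynomial.eq_of_monic_of_associated
      (GeoPadic.monic_ms_prod hfac_mon) hfbarmon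
      (UniqueFactorizationMonoid.prod_normalizedFactors hfbarne)
  have hfac_deg : ∀ a ∈ N, a.natDegree = d := fun a ha => by
    rw [hd]
    refine GeoPadic.factor_degree p hp hpq a (hfac_irr a ha) ?_
    have h1 : a ∣ fbar := UniqueFactorizationMonoid.dvd_of_mem_normalizedFactors ha
    rwa [hfbar] at h1
  have hNnodup : N.Nodup :=
    (UniqueFactorizationMonoid.squarefree_iff_nodup_normalizedFactors hfbarne).mp hsqf
  have hcount : (Multiset.card N) * d = p - 1 := by
    have h1 := Polynomial.natDegree_multiset_prod_of_monic N hfac_mon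
    rw [hNprod, hfbardeg] at h1
    have h2 : (N.map Polynomial.natDegree).sum = Multiset.card N * d := by
      rw [Multiset.map_congr rfl hfac_deg]
      simp [Multiset.map_const', Multiset.sum_replicate]
    omega
  have hcardN : Multiset.card N = v := by
    rw [hv, ← hcount, Nat.mul_div_cancel _ hd_pos]
  -- lift
  set l := N.toList with hl
  have hlset : (↑l : Multiset (Polynomial (ZMod q))) = N := Multiset.coe_toList N
  have hlnodup : l.Nodup := by rw [← Multiset.coe_nodup, hlset]; exact hNnodup
  have hlprod : l.prod = fbar := by
    have h1 : (↑l : Multiset (Polynomial (ZMod q))).prod = l.prod := Multiset.prod_coe l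
    rw [hlset, hNprod] at h1
    exact h1.symm
  have hlmem : ∀ a ∈ l, a.Monic ∧ Irreducible a := fun a ha => by
    have ha' : a ∈ N := by rwa [← Multiset.mem_coe, hlset] at ha
    exact ⟨hfac_mon a ha', hfac_irr a ha'⟩
  have hlmemN : ∀ a ∈ l, a ∈ N := fun a ha => by rwa [← Multiset.mem_coe, hlset] at ha
  obtain ⟨L, hLlen, hLprod, hLmon, hLmap⟩ :=
    GeoPadic.lift_factors l hlnodup hlmem f hfmon (by rw [hlprod])
  have hLlen' : L.length = v := by
    rw [hLlen, hl, Multiset.length_toList, hcardN]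
  subst hLlen'
  have hmapget : ∀ r : Fin L.length,
      (L.get r).map (PadicInt.toZMod) = l.get (Fin.cast hLlen r) := by
    intro r
    have h3 : (L.map (Polynomial.map (PadicInt.toZMod)))[(r : ℕ)]'(by simpa using r.2)
        = l[(r : ℕ)]'(by rw [← hLlen]; exact r.2) := List.getElem_of_eq hLmap _
    rw [List.getElem_map] at h3
    simpa [List.get_eq_getElem] using h3
  have hgetmemN : ∀ r : Fin L.length, l.get (Fin.cast hLlen r) ∈ N := fun r =>
    hlmemN _ (l.get_mem _)
  have hprodL : (∏ r, L.get r) = f := by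
    rw [← List.prod_ofFn, List.ofFn_get, ← hLprod]
  refine ⟨fun r => L.get r, ?_, hprodL, ?_, ?_, ?_⟩
  · intro r
    have hmem := L.get_mem r
    have hmon := hLmon _ hmem
    have hirr : Irreducible ((L.get r).map (PadicInt.toZMod)) := by
      rw [hmapget]
      exact hfac_irr _ (hgetmemN r)
    refine ⟨hmon, GeoPadic.irreducible_of_red hmon hirr, ?_⟩
    rw [← hmon.natDegree_map (PadicInt.toZMod), hmapget]
    exact hfac_deg _ (hgetmemN r)
  · intro r
    have hmem := L.get_mem r
    have hmon := hLmon _ hmem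
    refine ⟨hmon.map _, ?_, ?_⟩
    · rw [hmapget]
      exact hfac_irr _ (hgetmemN r)
    · rw [hmapget]
      exact hfac_deg _ (hgetmemN r)
  · intro r1 r2 hr
    simp only at hr
    rw [hmapget, hmapget] at hr
    have hinj := List.nodup_iff_injective_get.mp hlnodup hr
    have : (r1 : ℕ) = (r2 : ℕ) := by
      have := congrArg Fin.val hinj
      simpa using this
    exact Fin.ext this
  · have h1 : (∏ r, (L.get r).map (PadicInt.toZMod))
        = ((∏ r, L.get r).map (PadicInt.toZMod)) := by
      rw [Polynomial.map_prod]
    rw [h1, hprodL]
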